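/- Fix an integer p ≥ 2 and r ≤ 0, 1 ≤ s ≤ p−1, and |q| < 1. Then ∑_{n=0}^∞ (q^{p(−r/2+1/2+n+(p−s)/(2p))²} − q^{p(−r/2+1/2+n+(p+s)/(2p))²}) = ∑_{n=0}^∞ (q^{p(r/2+n−s/(2p))²} − q^{p(r/2+n+s/(2p))²}). -/

import Mathlib

open Complex

private lemma summable_exp_quad {τ : ℂ} (hτ : 0 < τ.im) {P : ℝ} (hP : 0 < P) (a : ℝ) :
    Summable fun n : ℕ =>
      Complex.exp (2 * (Real.pi : ℂ) * I * τ * (P : ℂ) * (((a + n : ℝ)) : ℂ)^2) := by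
  rw [← summable_norm_iff]
  set K : ℝ := 2 * Real.pi * τ.im * P with hK
  have hKpos : 0 < K := by positivity
  have hnorm : ∀ n : ℕ,
      ‖Complex.exp (2 * (Real.pi : ℂ) * I * τ * (P : ℂ) * (((a + n : ℝ)) : ℂ)^2)‖
        = Real.exp (-K * (a + n)^2) := by
    intro n
    rw [Complex.norm_exp]
    congr 1
    have h : 2 * (Real.pi : ℂ) * I * τ * (P : ℂ) * (((a + n : ℝ)) : ℂ)^2
        = ((2 * Real.pi * P * (a + n)^2 : ℝ) : ℂ) * (I * τ) := by push_cast; ring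
    rw [h, Complex.re_ofReal_mul]
    simp [hK]
    ring
  have key : Summable fun n : ℕ => Real.exp (-K * (a^2 - (2*a - 1)^2 / 4)) * Real.exp (-K) ^ n :=
    (summable_geometric_of_lt_one (Real.exp_nonneg _)
      (Real.exp_lt_one_iff.mpr (by linarith))).mul_left _
  apply Summable.of_nonneg_of_le (fun n => norm_nonneg _) _ key
  intro n
  rw [hnorm n, ← Real.exp_nat_mul, ← Real.exp_add, Real.exp_le_exp]
  nlinarith [sq_nonneg ((n : ℝ) + (2*a - 1)/2), hKpos.le,
    mul_nonneg hKpos.le (sq_nonneg ((n : ℝ) + (2*a - 1)/2))]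

/-- The atypical singlet character identity: for `r ≤ 0`, `1 ≤ s ≤ p−1`, `q = e^{2πiτ}`,
`∑_{n≥0} (q^{p(−r/2+1/2+n+(p−s)/(2p))²} − q^{p(−r/2+1/2+n+(p+s)/(2p))²})
 = ∑_{n≥0} (q^{p(r/2+n−s/(2p))²} − q^{p(r/2+n+s/(2p))²})`. -/
theorem stmt10 (p : ℕ) (hp : 2 ≤ p) (r : ℤ) (hr : r ≤ 0) (s : ℕ)
    (hs1 : 1 ≤ s) (hs2 : s ≤ p - 1) (τ : ℂ) (hτ : 0 < τ.im) :
    ∑' n : ℕ,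
      (Complex.exp (2 * (Real.pi : ℂ) * I * τ * (p : ℂ) *
          (-(r : ℂ)/2 + 1/2 + (n : ℂ) + ((p : ℂ) - (s : ℂ))/(2 * (p : ℂ)))^2) -
       Complex.exp (2 * (Real.pi : ℂ) * I * τ * (p : ℂ) *
          (-(r : ℂ)/2 + 1/2 + (n : ℂ) + ((p : ℂ) + (s : ℂ))/(2 * (p : ℂ)))^2)) =
    ∑' n : ℕ,
      (Complex.exp (2 * (Real.pi : ℂ) * I * τ * (p : ℂ) *
          ((r : ℂ)/2 + (n : ℂ) - (s : ℂ)/(2 * (p : ℂ)))^2) -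
       Complex.exp (2 * (Real.pi : ℂ) * I * τ * (p : ℂ) *
          ((r : ℂ)/2 + (n : ℂ) + (s : ℂ)/(2 * (p : ℂ)))^2)) := by
  have hp0 : (0 : ℝ) < (p : ℝ) := by positivity
  have hpC : ((p : ℝ) : ℂ) ≠ 0 := by exact_mod_cast hp0.ne'
  have hpC' : (p : ℂ) ≠ 0 := by exact_mod_cast hp0.ne'
  set f : ℝ → ℂ := fun x =>
    Complex.exp (2 * (Real.pi : ℂ) * I * τ * (p : ℂ) * ((x : ℝ) : ℂ)^2) with hf
  have feven : ∀ x : ℝ, f (-x) = f x := by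
    intro x; simp only [hf, Complex.ofReal_neg, neg_sq]
  set b : ℝ := (r : ℝ)/2 - (s : ℝ)/(2 * p) with hb
  set b' : ℝ := (r : ℝ)/2 + (s : ℝ)/(2 * p) with hb'
  set d : ℕ := (1 - r).toNat with hdd
  have hd : (d : ℝ) = 1 - (r : ℝ) := by
    have : ((1 - r).toNat : ℤ) = 1 - r := Int.toNat_of_nonneg (by omega)
    rw [hdd]; exact_mod_cast congrArg (Int.cast : ℤ → ℝ) this
  set G : ℕ → ℂ := fun k => f (b + k) - f (b' + k) with hG
  have hGsum : Summable G := by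
    exact (summable_exp_quad hτ hp0 b).sub (summable_exp_quad hτ hp0 b')
  have hL : (∑' n : ℕ,
      (Complex.exp (2 * (Real.pi : ℂ) * I * τ * (p : ℂ) *
          (-(r : ℂ)/2 + 1/2 + (n : ℂ) + ((p : ℂ) - (s : ℂ))/(2 * (p : ℂ)))^2) -
       Complex.exp (2 * (Real.pi : ℂ) * I * τ * (p : ℂ) *
          (-(r : ℂ)/2 + 1/2 + (n : ℂ) + ((p : ℂ) + (s : ℂ))/(2 * (p : ℂ)))^2)))
      = ∑' n : ℕ, G (n + d) := by
    apply tsum_congr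
    intro n
    simp only [hG, hf, hb, hb']
    congr 2
    · congr 1
      push_cast [hd]
      field_simp
      ring
    · congr 1
      push_cast [hd]
      field_simp
      ring
  have hR : (∑' n : ℕ,
      (Complex.exp (2 * (Real.pi : ℂ) * I * τ * (p : ℂ) *
          ((r : ℂ)/2 + (n : ℂ) - (s : ℂ)/(2 * (p : ℂ)))^2) -
       Complex.exp (2 * (Real.pi : ℂ) * I * τ * (p : ℂ) *
          ((r : ℂ)/2 + (n : ℂ) + (s : ℂ)/(2 * (p : ℂ)))^2)))
      = ∑' n : ℕ, G n := by
    apply tsum_congr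
    intro n
    simp only [hG, hf, hb, hb']
    congr 2
    · congr 1
      push_cast
      field_simp
      ring
    · congr 1
      push_cast
      field_simp
      ring
  have hsplit := Summable.sum_add_tsum_nat_add (f := G) d hGsum
  have hzero : (∑ i ∈ Finset.range d, G i) = 0 := by
    have hrefl := Finset.sum_range_reflect G d
    have hneg : ∀ j ∈ Finset.range d, G (d - 1 - j) = - G j := by
      intro j hj
      rw [Finset.mem_range] at hj
      have hcast : ((d - 1 - j : ℕ) : ℝ) = (d : ℝ) - 1 - j := by
        have h1 : 1 + j ≤ d := by omega
        have : d - 1 - j = d - (1 + j) := by omega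
        rw [this]
        push_cast [Nat.cast_sub h1]
        ring
      have e1 : b + ((d - 1 - j : ℕ) : ℝ) = -(b' + j) := by
        rw [hcast, hb, hb', hd]; ring
      have e2 : b' + ((d - 1 - j : ℕ) : ℝ) = -(b + j) := by
        rw [hcast, hb, hb', hd]; ring
      simp only [hG, e1, e2, feven]
      ring
    rw [Finset.sum_congr rfl hneg, Finset.sum_neg_distrib] at hrefl
    have : (∑ i ∈ Finset.range d, G i) = -(∑ i ∈ Finset.range d, G i) := hrefl.symm
    linear_combination this / 2
  rw [hL, hR, ← hsplit, hzero, zero_add]
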